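/- Let (M,d) be a δ-hyperbolic space with basepoint o, and γ₁, γ₂ ∈ Isom(M). Suppose there is D > 0 such that: (i) (γ_i^{ε₁}·o | γ_j^{ε₂}·o)_o ≤ D for all i ≠ j in {1,2} and ε₁, ε₂ ∈ {±1}; (ii) (γ_i·o | γ_i⁻¹·o)_o ≤ D for i = 1,2; (iii) 0 < (1/2) max(κ(γ₁), κ(γ₂)) < min(κ(γ₁), κ(γ₂)) - D - δ. Then the subgroup ⟨γ₁, γ₂⟩ of Isom(M) is a non-abelian free group of rank two. -/

import Mathlib

/-- The Gromov product `(x|y)_o = (d(x,o) + d(y,o) - d(x,y))/2`. -/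
noncomputable def gromovProd {M : Type*} [MetricSpace M] (o x y : M) : ℝ :=
  (dist x o + dist y o - dist x y) / 2

private lemma gromovProd_symm {M : Type*} [MetricSpace M] (o x y : M) :
    gromovProd o x y = gromovProd o y x := by
  simp only [gromovProd, dist_comm x o, dist_comm x y, dist_comm y o]
  ring

private lemma gromovProd_le_dist {M : Type*} [MetricSpace M] (o x y : M) :
    gromovProd o x y ≤ dist x o := by
  have h := dist_triangle y x o
  rw [dist_comm y x] at h
  simp only [gromovProd]
  linarith

private lemma isom_dist_inv {M : Type*} [MetricSpace M] (e : M ≃ᵢ M) (x y : M) :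
    dist (e x) y = dist x (e⁻¹ y) := by
  conv_lhs => rw [show y = e (e⁻¹ y) by simp]
  exact e.dist_eq _ _

/-- Reduced words (no adjacent cancelling pair) satisfy the chain' condition. -/
private lemma chain_of_red (L : List (Bool × Bool))
    (h : ∀ (L₂ L₃ : List (Bool × Bool)) (x b : Bool), L ≠ L₂ ++ (x, b) :: (x, !b) :: L₃) :
    List.Chain' (fun a b : Bool × Bool => b ≠ (a.1, !a.2)) L := by
  induction L with
  | nil => exact List.isChain_nil
  | cons p L ih =>
    cases L with
    | nil => exact List.isChain_singleton _
    | cons q L' =>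
      rw [List.Chain', List.isChain_cons_cons]
      constructor
      · intro hq
        exact h [] L' p.1 p.2 (by simp [hq])
      · exact ih (fun L₂ L₃ x b heq => h (p :: L₂) L₃ x b (by rw [heq]; rfl))

/-- The ping-pong induction: for a reduced nonempty word, the image of `o` stays
in the shadow of the first letter. -/
private lemma pingpong_key {M : Type*} [MetricSpace M] (δ : ℝ)
    (hδ : ∀ p x y z : M, min (gromovProd p x z) (gromovProd p z y) - δ ≤ gromovProd p x y)
    (o : M) (g : Bool × Bool → (M ≃ᵢ M)) (C D : ℝ)
    (hinv : ∀ p : Bool × Bool, g (p.1, !p.2) = (g p)⁻¹)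
    (hcross : ∀ p q : Bool × Bool, p ≠ q → gromovProd o (g p o) (g q o) ≤ D)
    (hlow : ∀ p : Bool × Bool, C + D + δ ≤ dist (g p o) o)
    (hDδ : D + δ < C) (hDδ0 : 0 ≤ D + δ) :
    ∀ (L : List (Bool × Bool)) (p : Bool × Bool),
      List.Chain' (fun a b : Bool × Bool => b ≠ (a.1, !a.2)) (p :: L) →
      C ≤ gromovProd o ((((p :: L).map g).prod) o) (g p o) := by
  intro L
  induction L with
  | nil =>
    intro p _
    have : (((p :: []).map g).prod) o = g p o := by simp
    rw [this]
    have : gromovProd o (g p o) (g p o) = dist (g p o) o := by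
      simp [gromovProd]
    rw [this]
    linarith [hlow p]
  | cons q L' ih =>
    intro p hchain
    rw [List.Chain', List.isChain_cons_cons] at hchain
    obtain ⟨hpq, hchain'⟩ := hchain
    have IH := ih q hchain'
    set W : M ≃ᵢ M := (((q :: L').map g).prod) with hW
    -- bound the Gromov product of W o with the inverse of the first letter
    have hne : (p.1, !p.2) ≠ q := fun h => hpq h.symm
    have hcr : gromovProd o (g (p.1, !p.2) o) (g q o) ≤ D := hcross _ _ hne
    have h6 : gromovProd o (g (p.1, !p.2) o) (W o) ≤ D + δ := by
      rcases le_or_gt (gromovProd o (g (p.1, !p.2) o) (W o)) (D + δ) with h | h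
      · exact h
      · exfalso
        have h7 : D + δ < min (gromovProd o (g (p.1, !p.2) o) (W o))
            (gromovProd o (W o) (g q o)) := lt_min h (lt_of_lt_of_le hDδ IH)
        have h8 := hδ o (g (p.1, !p.2) o) (g q o) (W o)
        linarith
    -- rewrite using hinv
    rw [hinv p] at h6
    -- the product identity
    have hprod : (((p :: q :: L').map g).prod) = g p * W := by
      simp [hW]
    rw [hprod]
    have happ : (g p * W) o = g p (W o) := rfl
    have e1 : dist ((g p) (W o)) o = dist (W o) ((g p)⁻¹ o) := isom_dist_inv _ _ _
    have e2 : dist ((g p)⁻¹ o) o = dist (g p o) o := by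
      rw [dist_comm, ← isom_dist_inv]
    have e3 : dist ((g p) (W o)) ((g p) o) = dist (W o) o := (g p).dist_eq _ _
    have hid : gromovProd o ((g p * W) o) (g p o)
        = dist (g p o) o - gromovProd o (W o) ((g p)⁻¹ o) := by
      show gromovProd o (g p (W o)) (g p o) = _
      simp only [gromovProd]
      rw [e1, e3]
      rw [show dist (W o) ((g p)⁻¹ o) = dist (W o) ((g p)⁻¹ o) from rfl]
      have e2' : dist ((g p)⁻¹ o) o = dist (g p o) o := e2
      linarith [e2']
    rw [hid]
    have h9 : gromovProd o (W o) ((g p)⁻¹ o) ≤ D + δ := by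
      rw [gromovProd_symm]; exact h6
    linarith [hlow p]

theorem ping_pong_free {M : Type*} [MetricSpace M] (δ : ℝ)
    (hδ : ∀ p x y z : M, min (gromovProd p x z) (gromovProd p z y) - δ ≤ gromovProd p x y)
    (o : M) (γ₁ γ₂ : M ≃ᵢ M) (D : ℝ) (hD : 0 < D)
    (h1 : ∀ ε₁ ε₂ : ℤ, (ε₁ = 1 ∨ ε₁ = -1) → (ε₂ = 1 ∨ ε₂ = -1) →
      gromovProd o ((γ₁ ^ ε₁) o) ((γ₂ ^ ε₂) o) ≤ D)
    (h2 : gromovProd o (γ₁ o) (γ₁⁻¹ o) ≤ D ∧ gromovProd o (γ₂ o) (γ₂⁻¹ o) ≤ D)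
    (h3 : 0 < (1 / 2) * max (dist (γ₁ o) o) (dist (γ₂ o) o) ∧
      (1 / 2) * max (dist (γ₁ o) o) (dist (γ₂ o) o)
        < min (dist (γ₁ o) o) (dist (γ₂ o) o) - D - δ) :
    Function.Injective
      (FreeGroup.lift (fun b : Bool => if b then γ₁ else γ₂) : FreeGroup Bool →* (M ≃ᵢ M)) := by
  obtain ⟨h2a, h2b⟩ := h2
  obtain ⟨h3a, h3b⟩ := h3
  have hδ0 : 0 ≤ δ := by
    have := hδ o o o o
    simp [gromovProd] at this
    linarith
  set f : Bool → (M ≃ᵢ M) := fun b : Bool => if b then γ₁ else γ₂ with hf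
  set g : Bool × Bool → (M ≃ᵢ M) := fun p => cond p.2 (f p.1) (f p.1)⁻¹ with hg
  set m : ℝ := min (dist (γ₁ o) o) (dist (γ₂ o) o) with hm
  set Mx : ℝ := max (dist (γ₁ o) o) (dist (γ₂ o) o) with hMx
  set C : ℝ := m - D - δ with hC
  have hmMx : m ≤ Mx := min_le_max
  have hC0 : 0 < C := by linarith
  have hDδ : D + δ < C := by linarith
  have hDδ0 : 0 ≤ D + δ := by linarith
  -- inverse letters
  have hginv : ∀ p : Bool × Bool, g (p.1, !p.2) = (g p)⁻¹ := by
    rintro ⟨i, s⟩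
    cases s <;> simp [hg]
  -- lower bound on displacement of letters
  have hlow : ∀ p : Bool × Bool, C + D + δ ≤ dist (g p o) o := by
    rintro ⟨i, s⟩
    have hdi : ∀ e : M ≃ᵢ M, dist (e⁻¹ o) o = dist (e o) o := by
      intro e
      rw [dist_comm, ← isom_dist_inv]
    have hmi : m ≤ dist (f i o) o := by
      cases i
      · simpa [hf, hm] using min_le_right (dist (γ₁ o) o) (dist (γ₂ o) o)
      · simpa [hf, hm] using min_le_left (dist (γ₁ o) o) (dist (γ₂ o) o)
    have : dist (g (i, s) o) o = dist (f i o) o := by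
      cases s <;> simp [hg, hdi]
    rw [this]
    linarith
  -- cross bounds
  have cross : ∀ p q : Bool × Bool, p ≠ q → gromovProd o (g p o) (g q o) ≤ D := by
    rintro ⟨i, s⟩ ⟨j, t⟩ hne
    have A11 : gromovProd o (γ₁ o) (γ₂ o) ≤ D := by
      have := h1 1 1 (Or.inl rfl) (Or.inl rfl); rwa [zpow_one, zpow_one] at this
    have A12 : gromovProd o (γ₁ o) (γ₂⁻¹ o) ≤ D := by
      have := h1 1 (-1) (Or.inl rfl) (Or.inr rfl); rwa [zpow_one, zpow_neg_one] at this
    have A21 : gromovProd o (γ₁⁻¹ o) (γ₂ o) ≤ D := by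
      have := h1 (-1) 1 (Or.inr rfl) (Or.inl rfl); rwa [zpow_neg_one, zpow_one] at this
    have A22 : gromovProd o (γ₁⁻¹ o) (γ₂⁻¹ o) ≤ D := by
      have := h1 (-1) (-1) (Or.inr rfl) (Or.inr rfl); rwa [zpow_neg_one, zpow_neg_one] at this
    cases i <;> cases j <;> cases s <;> cases t <;>
      simp only [hg, hf, Bool.cond_true, Bool.cond_false, if_true, if_false,
        Bool.false_eq_true, ite_true, ite_false] <;>
      first
        | exact absurd rfl hne
        | exact A11 | exact A12 | exact A21 | exact A22 | exact h2a | exact h2b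
        | (rw [gromovProd_symm]
           first
            | exact A11 | exact A12 | exact A21 | exact A22 | exact h2a | exact h2b)
  -- conclude
  rw [injective_iff_map_eq_one]
  intro x hx
  by_contra hne
  have hL : x.toWord ≠ [] := fun h => hne (FreeGroup.toWord_eq_nil_iff.mp h)
  obtain ⟨p, L, hPL⟩ : ∃ p L, x.toWord = p :: L := by
    cases hE : x.toWord with
    | nil => exact absurd hE hL
    | cons p L => exact ⟨p, L, rfl⟩
  have hred : ∀ (L₂ L₃ : List (Bool × Bool)) (y b : Bool),
      x.toWord ≠ L₂ ++ (y, b) :: (y, !b) :: L₃ := by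
    intro L₂ L₃ y b h
    have hr : FreeGroup.reduce x.toWord = L₂ ++ (y, b) :: (y, !b) :: L₃ := by
      rw [FreeGroup.reduce_toWord]; exact h
    exact FreeGroup.reduce.not hr
  have hchain := chain_of_red x.toWord hred
  rw [hPL] at hchain
  have hkey := pingpong_key δ hδ o g C D hginv cross hlow hDδ hDδ0 L p hchain
  have hlift : (FreeGroup.lift f) x = (((p :: L).map g).prod) := by
    conv_lhs => rw [← FreeGroup.mk_toWord (x := x)]
    rw [FreeGroup.lift_mk, hPL]
  rw [← hlift, hx] at hkey
  have : gromovProd o ((1 : M ≃ᵢ M) o) (g p o) = 0 := by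
    show gromovProd o o (g p o) = 0
    simp [gromovProd, dist_comm]
  rw [this] at hkey
  linarith
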